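/- Let f be a subdistribution kernel from X to A × B. Define m : X → A → ℝ≥0∞ by m x a = ∑' b, f x (a, b), and define c : A × X → B → ℝ≥0∞ by c (a, x) b = f x (a, b) / m x a (ℝ≥0∞ division, so c (a, x) b = 0 when m x a = 0). Then c is a subdistribution kernel from A × X to B which is quasi-total (∑' b, c (a, x) b = 1 when m x a ≠ 0 and = 0 when m x a = 0), and f x (a, b) = m x a * c (a, x) b for all x, a, b. -/

import Mathlib

open scoped ENNReal

/-- The explicit quasi-total conditional of a subdistribution kernel
`f : X → A × B`, given by `c (a, x) b = f x (a, b) / m x a` where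
`m x a = ∑' b, f x (a, b)` is the marginal. -/
theorem subdistKernel_conditional_spec
    {X A B : Type*} (f : X → A × B → ℝ≥0∞) (hf : ∀ x, ∑' p, f x p ≤ 1)
    (m : X → A → ℝ≥0∞) (hm : ∀ x a, m x a = ∑' b, f x (a, b))
    (c : A × X → B → ℝ≥0∞) (hc : ∀ a x b, c (a, x) b = f x (a, b) / m x a) :
    (∀ a x, ∑' b, c (a, x) b ≤ 1) ∧
    (∀ a x, m x a ≠ 0 → ∑' b, c (a, x) b = 1) ∧
    (∀ a x, m x a = 0 → ∑' b, c (a, x) b = 0) ∧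
    (∀ x a b, f x (a, b) = m x a * c (a, x) b) := by
  have hmle : ∀ x a, m x a ≤ 1 := by
    intro x a
    rw [hm]
    refine le_trans ?_ (hf x)
    exact ENNReal.tsum_comp_le_tsum_of_injective
      (f := fun b : B => (a, b)) (fun b b' h => (Prod.mk.injEq _ _ _ _ ▸ h).2) (f x)
  have hmtop : ∀ x a, m x a ≠ ⊤ := fun x a => ne_top_of_le_ne_top ENNReal.one_ne_top (hmle x a)
  have hsum : ∀ a x, ∑' b, c (a, x) b = m x a / m x a := by
    intro a x
    simp only [hc, div_eq_mul_inv, ENNReal.tsum_mul_right, ← hm]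
  refine ⟨?_, ?_, ?_, ?_⟩
  · intro a x
    rw [hsum]
    exact ENNReal.div_self_le_one
  · intro a x h
    rw [hsum, ENNReal.div_self h (hmtop x a)]
  · intro a x h
    rw [hsum, h, ENNReal.zero_div]
  · intro x a b
    rcases eq_or_ne (m x a) 0 with h | h
    · have : f x (a, b) = 0 := by
        have := hm x a ▸ h
        have hle : f x (a, b) ≤ ∑' b, f x (a, b) := ENNReal.le_tsum b
        simpa [this] using hle
      simp [this, h]
    · rw [hc, ENNReal.mul_div_cancel h (hmtop x a)]
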